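/- For every α ∈ (0,1) there exist a probability space and random variables p_1, p_2 on it, each uniformly distributed on [0,1] (but possibly dependent), such that Pr( 2·p_1·p_2/(p_1 + p_2) ≤ α/2 ) = α; that is, the level-α bound for the harmonic mean of two p-values is attained by some joint distribution (copula) with uniform marginals. -/

import Mathlib

open MeasureTheory

/-- for every `α ∈ (0,1)` there is a joint distribution (copula) of two
uniformly-distributed-on-`[0,1]` p-values attaining `Pr(2p₁p₂/(p₁+p₂) ≤ α/2) = α`. -/
theorem stmt_5 (α : ℝ) (hα : α ∈ Set.Ioo (0:ℝ) 1) :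
    ∃ μ : Measure (ℝ × ℝ), IsProbabilityMeasure μ ∧
      μ.map Prod.fst = volume.restrict (Set.Icc (0:ℝ) 1) ∧
      μ.map Prod.snd = volume.restrict (Set.Icc (0:ℝ) 1) ∧
      μ {q : ℝ × ℝ | 2 * q.1 * q.2 / (q.1 + q.2) ≤ α / 2} = ENNReal.ofReal α := by
  obtain ⟨hα0, hα1⟩ := hα
  set f : ℝ → ℝ := fun u => if u ≤ α then α - u else u with hf_def
  have hf_meas : Measurable f := by
    apply Measurable.ite (measurableSet_le measurable_id measurable_const)
    · exact measurable_const.sub measurable_id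
    · exact measurable_id
  set g : ℝ → ℝ × ℝ := fun u => (u, f u) with hg_def
  have hg_meas : Measurable g := measurable_id.prodMk hf_meas
  set ν : Measure ℝ := volume.restrict (Set.Icc (0:ℝ) 1) with hν_def
  have hν_prob : IsProbabilityMeasure ν := by
    constructor
    rw [hν_def, Measure.restrict_apply_univ, Real.volume_Icc]
    norm_num
  refine ⟨ν.map g, ?_, ?_, ?_, ?_⟩
  · exact Measure.isProbabilityMeasure_map hg_meas.aemeasurable
  · rw [Measure.map_map measurable_fst hg_meas]
    have : (Prod.fst ∘ g) = id := rfl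
    rw [this, Measure.map_id]
  · -- snd marginal: f is measure preserving on [0,1]
    rw [Measure.map_map measurable_snd hg_meas]
    have hcomp : (Prod.snd ∘ g) = f := rfl
    rw [hcomp]
    have hsplit : Set.Icc (0:ℝ) 1 = Set.Icc 0 α ∪ Set.Ioc α 1 :=
      (Set.Icc_union_Ioc_eq_Icc hα0.le hα1.le).symm
    have hdisj : Disjoint (Set.Icc (0:ℝ) α) (Set.Ioc α 1) := by
      apply Set.disjoint_left.2
      rintro x ⟨_, hx2⟩ ⟨hx3, _⟩
      exact absurd hx2 (not_le.2 hx3)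
    have hrestr : ν = volume.restrict (Set.Icc 0 α) + volume.restrict (Set.Ioc α 1) := by
      rw [hν_def, hsplit, Measure.restrict_union hdisj measurableSet_Ioc]
    rw [hrestr, Measure.map_add _ _ hf_meas]
    have h1 : Measure.map f (volume.restrict (Set.Icc 0 α)) = volume.restrict (Set.Icc 0 α) := by
      have heq : f =ᵐ[volume.restrict (Set.Icc 0 α)] (fun u => α - u) := by
        filter_upwards [ae_restrict_mem measurableSet_Icc] with u hu
        exact if_pos hu.2
      rw [Measure.map_congr heq]
      have hpre : (fun u : ℝ => α - u) ⁻¹' Set.Icc 0 α = Set.Icc 0 α := by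
        ext x
        simp only [Set.mem_preimage, Set.mem_Icc]
        constructor <;> rintro ⟨h1, h2⟩ <;> constructor <;> linarith
      calc Measure.map (fun u : ℝ => α - u) (volume.restrict (Set.Icc 0 α))
          = Measure.map (fun u : ℝ => α - u)
              (volume.restrict ((fun u : ℝ => α - u) ⁻¹' Set.Icc 0 α)) := by rw [hpre]
        _ = (Measure.map (fun u : ℝ => α - u) volume).restrict (Set.Icc 0 α) :=
            (Measure.restrict_map (measurable_const.sub measurable_id) measurableSet_Icc).symm
        _ = volume.restrict (Set.Icc 0 α) := by
            rw [Measure.map_sub_left_eq_self volume α]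
    have h2 : Measure.map f (volume.restrict (Set.Ioc α 1)) = volume.restrict (Set.Ioc α 1) := by
      have heq : f =ᵐ[volume.restrict (Set.Ioc α 1)] id := by
        filter_upwards [ae_restrict_mem measurableSet_Ioc] with u hu
        exact if_neg (not_le.2 hu.1)
      rw [Measure.map_congr heq, Measure.map_id]
    rw [h1, h2, ← Measure.restrict_union hdisj measurableSet_Ioc, ← hsplit]
  · -- the event probability
    have hS : MeasurableSet {q : ℝ × ℝ | 2 * q.1 * q.2 / (q.1 + q.2) ≤ α / 2} := by
      apply measurableSet_le _ measurable_const
      exact (((measurable_const.mul measurable_fst).mul measurable_snd).div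
        (measurable_fst.add measurable_snd))
    rw [Measure.map_apply hg_meas hS, hν_def,
      Measure.restrict_apply (hg_meas hS)]
    have hset : g ⁻¹' {q : ℝ × ℝ | 2 * q.1 * q.2 / (q.1 + q.2) ≤ α / 2} ∩ Set.Icc 0 1
        = Set.Icc 0 α := by
      ext u
      simp only [hg_def, Set.mem_inter_iff, Set.mem_preimage, Set.mem_setOf_eq, Set.mem_Icc]
      constructor
      · rintro ⟨hcond, hu0, hu1⟩
        refine ⟨hu0, ?_⟩
        by_contra hgt
        push_neg at hgt
        have hfu : f u = u := if_neg (not_le.2 hgt)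
        rw [hfu] at hcond
        have hu_pos : 0 < u := lt_trans hα0 hgt
        have : 2 * u * u / (u + u) = u := by
          field_simp
          ring
        rw [this] at hcond
        linarith
      · rintro ⟨hu0, huα⟩
        refine ⟨?_, hu0, le_trans huα hα1.le⟩
        have hfu : f u = α - u := if_pos huα
        rw [hfu]
        have hsum : u + (α - u) = α := by ring
        rw [hsum, div_le_iff₀ hα0]
        nlinarith [sq_nonneg (α - 2 * u)]
    rw [hset, Real.volume_Icc, sub_zero]
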